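/- For any finite multiset A of nonnegative reals and any positive integer k, Ψ_{k+1}(A) ≥ Ψ_k(A)·L(A), where L(A) is the sum of elements of A. -/
import Mathlib


/-- Complete homogeneous symmetric polynomial of degree `k` in the elements of `l`. -/
def hpoly : ℕ → List ℝ → ℝ
  | 0, _ => 1
  | _ + 1, [] => 0
  | k + 1, x :: l => x * hpoly k (x :: l) + hpoly (k + 1) l
termination_by k l => (k, l.length)

/-- `Ψ_k(A) = k! · h_k(A)`. -/
noncomputable def Psi (k : ℕ) (l : List ℝ) : ℝ := (Nat.factorial k : ℝ) * hpoly k l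

lemma hpoly_cons (k : ℕ) (x : ℝ) (l : List ℝ) :
    hpoly (k + 1) (x :: l) = x * hpoly k (x :: l) + hpoly (k + 1) l := by
  rw [hpoly]

lemma hpoly_nonneg : ∀ (k : ℕ) (l : List ℝ), (∀ x ∈ l, 0 ≤ x) → 0 ≤ hpoly k l := by
  intro k
  induction k with
  | zero => intro l _; simp [hpoly]
  | succ k ih =>
    intro l
    induction l with
    | nil => intro _; simp [hpoly]
    | cons x l ihl =>
      intro h
      have hx : 0 ≤ x := h x (by simp)
      have h1 := ih (x :: l) h
      have h2 := ihl (fun y hy => h y (List.mem_cons_of_mem _ hy))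
      rw [hpoly_cons]
      positivity

lemma hpoly_one (l : List ℝ) : hpoly 1 l = l.sum := by
  induction l with
  | nil => simp [hpoly]
  | cons x l ih => rw [hpoly_cons, ih]; simp [hpoly]

lemma hpoly_key : ∀ (k : ℕ) (l : List ℝ), (∀ x ∈ l, 0 ≤ x) →
    hpoly k l * l.sum ≤ (k + 1 : ℝ) * hpoly (k + 1) l := by
  intro k
  induction k with
  | zero => intro l _; simp [hpoly, hpoly_one]
  | succ j ih =>
    intro l
    induction l with
    | nil => intro _; simp [hpoly]
    | cons x l ihl =>
      intro h
      have hx : 0 ≤ x := h x (by simp)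
      have hl' : ∀ y ∈ l, 0 ≤ y := fun y hy => h y (List.mem_cons_of_mem _ hy)
      have hS : 0 ≤ l.sum := List.sum_nonneg hl'
      have h1 := ih (x :: l) h
      have h2 := ihl hl'
      have hn1 := hpoly_nonneg j (x :: l) h
      have hn2 := hpoly_nonneg (j + 1) (x :: l) h
      rw [List.sum_cons] at h1 ⊢
      rw [hpoly_cons (j + 1) x l, hpoly_cons j x l] at *
      push_cast at *
      nlinarith [mul_le_mul_of_nonneg_left h1 hx, mul_nonneg hx hn1,
        mul_nonneg (mul_nonneg hx hn1) hS]

theorem stmt_14 (l : List ℝ) (hl : ∀ x ∈ l, 0 ≤ x) (k : ℕ) (hk : 1 ≤ k) :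
    Psi (k + 1) l ≥ Psi k l * l.sum := by
  have key := hpoly_key k l hl
  have hfac : (0 : ℝ) < Nat.factorial k := by positivity
  unfold Psi
  rw [Nat.factorial_succ]
  push_cast
  calc (k.factorial : ℝ) * hpoly k l * l.sum
      = (k.factorial : ℝ) * (hpoly k l * l.sum) := by ring
    _ ≤ (k.factorial : ℝ) * (((k : ℝ) + 1) * hpoly (k + 1) l) :=
        mul_le_mul_of_nonneg_left key (le_of_lt hfac)
    _ = ((k : ℝ) + 1) * (k.factorial : ℝ) * hpoly (k + 1) l := by ring
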